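/- (Typical projector existence) For any density operator ρ on a finite-dimensional Hilbert space and any ε, δ > 0, there exists n₀ such that for all n ≥ n₀ there is an orthogonal projector Π on H^{⊗n} commuting with ρ^{⊗n} satisfying Tr(ρ^{⊗n} Π) ≥ 1 − ε and Tr Π ≤ 2^{n(H(ρ)+δ)}. -/

import Mathlib

set_option linter.unusedSectionVars false
set_option maxHeartbeats 2000000

open Matrix Kronecker BigOperators ComplexOrder

/-- Trace norm `‖A‖₁ = Tr √(Aᴴ A)`. -/
noncomputable def traceNorm {n : Type*} [Fintype n] [DecidableEq n]
    (A : Matrix n n ℂ) : ℝ :=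
  (((Matrix.posSemidef_conjTranspose_mul_self A).1.eigenvectorUnitary.1 *
      diagonal (((↑) : ℝ → ℂ) ∘ (√·) ∘ (Matrix.posSemidef_conjTranspose_mul_self A).1.eigenvalues) *
      (star (Matrix.posSemidef_conjTranspose_mul_self A).1.eigenvectorUnitary :
        Matrix n n ℂ)).trace).re

/-- Von Neumann entropy (base 2), via eigenvalues; `0` for non-Hermitian input. -/
noncomputable def vnEntropy {n : Type*} [Fintype n] [DecidableEq n]
    (ρ : Matrix n n ℂ) : ℝ :=
  if h : ρ.IsHermitian then
    -∑ i, (h.eigenvalues i) * Real.logb 2 (h.eigenvalues i)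
  else 0

/-- A density operator: positive semidefinite with unit trace. -/
def IsDensity {n : Type*} [Fintype n] (ρ : Matrix n n ℂ) : Prop :=
  ρ.PosSemidef ∧ ρ.trace = 1

/-- Rank-one projector `|v⟩⟨v|`. -/
noncomputable def proj {n : Type*} (v : n → ℂ) : Matrix n n ℂ :=
  Matrix.vecMulVec v (star v)

/-- Partial trace over the second tensor factor. -/
noncomputable def ptraceSnd {a b : Type*} [Fintype b]
    (ρ : Matrix (a × b) (a × b) ℂ) : Matrix a a ℂ :=
  Matrix.of fun i j => ∑ k, ρ (i, k) (j, k)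

/-- Partial trace over the first tensor factor. -/
noncomputable def ptraceFst {a b : Type*} [Fintype a]
    (ρ : Matrix (a × b) (a × b) ℂ) : Matrix b b ℂ :=
  Matrix.of fun i j => ∑ k, ρ (k, i) (k, j)

/-- Quantum mutual information `I(A;B) = H(A) + H(B) − H(AB)`. -/
noncomputable def mutualInfo {a b : Type*} [Fintype a] [Fintype b]
    [DecidableEq a] [DecidableEq b] (ρ : Matrix (a × b) (a × b) ℂ) : ℝ :=
  vnEntropy (ptraceSnd ρ) + vnEntropy (ptraceFst ρ) - vnEntropy ρ

/-- `n`-fold tensor power of a matrix. -/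
noncomputable def tpow {d : ℕ} (ρ : Matrix (Fin d) (Fin d) ℂ) (n : ℕ) :
    Matrix (Fin n → Fin d) (Fin n → Fin d) ℂ :=
  Matrix.of fun f g => ∏ i, ρ (f i) (g i)

/-- The cq state obtained by measuring the `A` part of a bipartite state with POVM `Λ`:
`ρ^{XB} = Σ_x |x⟩⟨x| ⊗ Tr_A((Λ_x ⊗ I)ρ)`. -/
noncomputable def measureA {a b m : Type*} [Fintype a] [DecidableEq m]
    (Λ : m → Matrix a a ℂ) (ρ : Matrix (a × b) (a × b) ℂ) :
    Matrix (m × b) (m × b) ℂ :=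
  Matrix.of fun xi yj =>
    if xi.1 = yj.1 then ∑ k, ∑ l, (Λ xi.1) k l * ρ (l, xi.2) (k, yj.2) else 0

/-- Unitarity for (possibly rectangular between index types) matrices. -/
def IsUnitaryMat {p q : Type*} [Fintype p] [Fintype q] [DecidableEq p] [DecidableEq q]
    (U : Matrix p q ℂ) : Prop :=
  U * Uᴴ = 1 ∧ Uᴴ * U = 1

namespace TPaux

variable {m : Type*} [Fintype m] [DecidableEq m]

lemma vmv_herm (v : m → ℂ) : (vecMulVec v (star v)).IsHermitian := by
  ext i j; simp [conjTranspose_apply, vecMulVec_apply, mul_comm]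

lemma mul_vmv (M : Matrix m m ℂ) (v w : m → ℂ) :
    M * vecMulVec v w = vecMulVec (M *ᵥ v) w := by
  ext i j
  simp only [Matrix.mul_apply, vecMulVec_apply, mulVec, dotProduct, Finset.sum_mul]
  exact Finset.sum_congr rfl fun k _ => by ring

lemma vmv_mul (v w : m → ℂ) (M : Matrix m m ℂ) :
    vecMulVec v w * M = vecMulVec v (w ᵥ* M) := by
  ext i j
  simp only [Matrix.mul_apply, vecMulVec_apply, vecMul, dotProduct, Finset.mul_sum]
  exact Finset.sum_congr rfl fun k _ => by ring

lemma vmv_mul_vmv (a b c e : m → ℂ) :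
    vecMulVec a b * vecMulVec c e = (b ⬝ᵥ c) • vecMulVec a e := by
  ext i j
  simp only [Matrix.mul_apply, vecMulVec_apply, dotProduct, Matrix.smul_apply, smul_eq_mul,
    Finset.sum_mul]
  exact Finset.sum_congr rfl fun k _ => by ring

lemma trace_vmv (v w : m → ℂ) : (vecMulVec v w).trace = ∑ i, v i * w i := by
  simp [Matrix.trace, Matrix.diag, vecMulVec_apply]

lemma smul_vmv (c : ℂ) (v w : m → ℂ) :
    vecMulVec (c • v) w = c • vecMulVec v w := by
  ext i j; simp [vecMulVec_apply, mul_assoc]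

lemma vmv_smul (c : ℂ) (v w : m → ℂ) :
    vecMulVec v (c • w) = c • vecMulVec v w := by
  ext i j; simp [vecMulVec_apply]; ring

lemma star_vecMul_herm {M : Matrix m m ℂ} (hM : M.IsHermitian) (v : m → ℂ) :
    star v ᵥ* M = star (M *ᵥ v) := by
  funext j
  simp only [vecMul, mulVec, dotProduct, Pi.star_apply, star_sum, star_mul']
  exact Finset.sum_congr rfl fun k _ => by
    rw [mul_comm, ← Matrix.conjTranspose_apply, hM.eq]

end TPaux

open TPaux

theorem typical_projector_exists {d : ℕ} (ρ : Matrix (Fin d) (Fin d) ℂ)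
    (hρ : IsDensity ρ) (ε δ : ℝ) (hε : 0 < ε) (hδ : 0 < δ) :
    ∃ n₀ : ℕ, ∀ n ≥ n₀, ∃ P : Matrix (Fin n → Fin d) (Fin n → Fin d) ℂ,
      P.IsHermitian ∧ P * P = P ∧ P * tpow ρ n = tpow ρ n * P ∧
      1 - ε ≤ (tpow ρ n * P).trace.re ∧
      P.trace.re ≤ (2 : ℝ) ^ ((n : ℝ) * (vnEntropy ρ + δ)) := by
  classical
  -- spectral setup
  have hH : ρ.IsHermitian := hρ.1.1
  set lam : Fin d → ℝ := hH.eigenvalues with hlamdef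
  have hlam0 : ∀ a, 0 ≤ lam a := fun a => hρ.1.eigenvalues_nonneg a
  set U : Matrix (Fin d) (Fin d) ℂ := (hH.eigenvectorUnitary : Matrix (Fin d) (Fin d) ℂ)
    with hUdef
  have hU1 : star U * U = 1 := Unitary.coe_star_mul_self hH.eigenvectorUnitary
  have hspec : ρ = U * diagonal (RCLike.ofReal ∘ lam) * star U := hH.spectral_theorem
  have hUmul : ρ * U = U * diagonal (RCLike.ofReal ∘ lam) := by
    conv_lhs => rw [hspec]
    rw [mul_assoc, hU1, mul_one]
  set u : Fin d → Fin d → ℂ := fun a i => U i a with hudef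
  have hcol : ∀ a, ρ *ᵥ u a = (lam a : ℂ) • u a := by
    intro a
    funext i
    have h1 := congrFun (congrFun hUmul i) a
    simp only [Matrix.mul_diagonal, Function.comp] at h1
    simp only [Matrix.mul_apply] at h1
    simpa [mulVec, dotProduct, u, mul_comm] using h1
  have honu : ∀ a b : Fin d, (∑ k, (starRingEnd ℂ) (u a k) * u b k) = if a = b then 1 else 0 := by
    intro a b
    have h1 := congrFun (congrFun hU1 a) b
    simpa [Matrix.mul_apply, Matrix.star_apply, Matrix.one_apply, u] using h1
  have hsumlam : ∑ a, lam a = 1 := by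
    have h1 : ρ.trace = ∑ a, (lam a : ℂ) := by
      conv_lhs => rw [hspec]
      rw [Matrix.trace_mul_cycle, hU1, one_mul, Matrix.trace_diagonal]
      simp
    rw [hρ.2] at h1
    exact_mod_cast h1.symm
  -- entropy and variance
  set μ : ℝ := vnEntropy ρ with hμdef
  set X : Fin d → ℝ := fun a => -Real.logb 2 (lam a) with hXdef
  have hμ : μ = ∑ a, lam a * X a := by
    rw [hμdef, vnEntropy, dif_pos hH, ← Finset.sum_neg_distrib]
    exact Finset.sum_congr rfl fun a _ => by rw [hXdef]; ring
  set Y : Fin d → ℝ := fun a => X a - μ with hYdef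
  set Vr : ℝ := ∑ a, lam a * (Y a * Y a) with hVrdef
  have hVr0 : 0 ≤ Vr := Finset.sum_nonneg fun a _ =>
    mul_nonneg (hlam0 a) (mul_self_nonneg _)
  have hm1 : ∑ a, lam a * Y a = 0 := by
    simp only [hYdef, mul_sub, Finset.sum_sub_distrib, ← Finset.sum_mul, hsumlam, one_mul, ← hμ]
    ring
  refine ⟨⌈Vr / (ε * δ^2)⌉₊ + 1, fun n hn => ?_⟩
  have hn1 : 1 ≤ n := le_trans (Nat.le_add_left 1 _) hn
  have hnR : (1:ℝ) ≤ (n:ℝ) := by exact_mod_cast hn1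
  have hnpos : (0:ℝ) < n := lt_of_lt_of_le one_pos hnR
  set pR : (Fin n → Fin d) → ℝ := fun f => ∏ i, lam (f i) with hpRdef
  set S : (Fin n → Fin d) → ℝ := fun f => ∑ i, X (f i) with hSdef
  have hpR0 : ∀ f, 0 ≤ pR f := fun f => Finset.prod_nonneg fun i _ => hlam0 _
  have hsum1 : ∑ f : Fin n → Fin d, pR f = 1 := by
    rw [hpRdef, ← Fintype.prod_sum (fun (_ : Fin n) (a : Fin d) => lam a)]
    simp [hsumlam]
  set T : Finset (Fin n → Fin d) :=
    Finset.univ.filter (fun f => (∀ i, 0 < lam (f i)) ∧ S f ≤ n * (μ + δ)) with hTdef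
  -- variance identity
  have hij : ∀ i j : Fin n, (∑ f : Fin n → Fin d, pR f * (Y (f i) * Y (f j)))
      = if i = j then Vr else 0 := by
    intro i j
    have hg : ∀ f : Fin n → Fin d, pR f * (Y (f i) * Y (f j))
        = ∏ k, (lam (f k) * (if k = i then Y (f k) else 1) * (if k = j then Y (f k) else 1)) := by
      intro f
      rw [Finset.prod_mul_distrib, Finset.prod_mul_distrib,
        Finset.prod_ite_eq' Finset.univ i (fun k => Y (f k)),
        Finset.prod_ite_eq' Finset.univ j (fun k => Y (f k)),
        if_pos (Finset.mem_univ i), if_pos (Finset.mem_univ j)]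
      ring
    rw [Finset.sum_congr rfl fun f _ => hg f,
      ← Fintype.prod_sum (fun (k : Fin n) (a : Fin d) =>
        lam a * (if k = i then Y a else 1) * (if k = j then Y a else 1))]
    rcases eq_or_ne i j with rfl | hne
    · rw [if_pos rfl]
      have hterm : ∀ k : Fin n,
          (∑ a, lam a * (if k = i then Y a else 1) * (if k = i then Y a else 1))
          = if k = i then Vr else 1 := by
        intro k
        by_cases hk : k = i
        · subst hk
          simp only [eq_self_iff_true, if_true, hVrdef]
          exact Finset.sum_congr rfl fun a _ => by ring
        · simp [hk, hsumlam]
      rw [Finset.prod_congr rfl fun k _ => hterm k,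
        Finset.prod_ite_eq' Finset.univ i (fun _ => Vr), if_pos (Finset.mem_univ i)]
    · rw [if_neg hne]
      refine Finset.prod_eq_zero (Finset.mem_univ i) ?_
      simp only [eq_self_iff_true, if_true, if_neg hne]
      simpa using hm1
  have hVar : ∑ f : Fin n → Fin d, pR f * (S f - n * μ)^2 = n * Vr := by
    have h1 : ∀ f : Fin n → Fin d, S f - n * μ = ∑ i, Y (f i) := by
      intro f
      rw [hSdef]
      simp only [hYdef, Finset.sum_sub_distrib, Finset.sum_const, Finset.card_univ,
        Fintype.card_fin, nsmul_eq_mul]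
    calc ∑ f : Fin n → Fin d, pR f * (S f - n * μ)^2
        = ∑ f : Fin n → Fin d, ∑ i, ∑ j, pR f * (Y (f i) * Y (f j)) := by
          refine Finset.sum_congr rfl fun f _ => ?_
          rw [h1, sq, Finset.sum_mul_sum, Finset.mul_sum]
          exact Finset.sum_congr rfl fun i _ => by rw [Finset.mul_sum]
      _ = ∑ i, ∑ f : Fin n → Fin d, ∑ j, pR f * (Y (f i) * Y (f j)) := Finset.sum_comm
      _ = ∑ i, ∑ j, ∑ f : Fin n → Fin d, pR f * (Y (f i) * Y (f j)) :=
          Finset.sum_congr rfl fun i _ => Finset.sum_comm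
      _ = ∑ i : Fin n, Vr := by
          refine Finset.sum_congr rfl fun i _ => ?_
          rw [Finset.sum_congr rfl fun j _ => hij i j]
          simp
      _ = n * Vr := by simp [mul_comm]
  -- tail bound
  have hVle : Vr ≤ (n:ℝ) * (ε * δ^2) := by
    have hp : 0 < ε * δ^2 := mul_pos hε (pow_pos hδ 2)
    have h1 : Vr / (ε * δ^2) ≤ (n:ℝ) := by
      have h2 : (⌈Vr / (ε * δ^2)⌉₊ : ℝ) ≤ (n:ℝ) := by
        have h3 : ⌈Vr / (ε * δ^2)⌉₊ ≤ n := le_trans (Nat.le_succ _) hn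
        exact_mod_cast h3
      exact (Nat.le_ceil _).trans h2
    rw [div_le_iff₀ hp] at h1
    linarith [h1]
  have htail : ∑ f ∈ Tᶜ, pR f ≤ ε := by
    have hnd : (0:ℝ) < ((n:ℝ) * δ)^2 := by positivity
    have key : (∑ f ∈ Tᶜ, pR f) * ((n:ℝ) * δ)^2 ≤ n * Vr := by
      rw [Finset.sum_mul]
      calc ∑ f ∈ Tᶜ, pR f * ((n:ℝ) * δ)^2
          ≤ ∑ f ∈ Tᶜ, pR f * (S f - n * μ)^2 := by
            refine Finset.sum_le_sum fun f hf => ?_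
            rw [Finset.mem_compl, hTdef, Finset.mem_filter] at hf
            push_neg at hf
            by_cases hpos : ∀ i, 0 < lam (f i)
            · have hS := hf (Finset.mem_univ f) hpos
              have h2 : (n:ℝ) * δ ≤ S f - n * μ := by nlinarith
              have h3 : (0:ℝ) ≤ (n:ℝ) * δ := by positivity
              exact mul_le_mul_of_nonneg_left (by nlinarith) (hpR0 f)
            · push_neg at hpos
              obtain ⟨i, hi⟩ := hpos
              have hzi : lam (f i) = 0 := le_antisymm hi (hlam0 _)
              have hz : pR f = 0 := Finset.prod_eq_zero (Finset.mem_univ i) hzi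
              rw [hz, zero_mul, zero_mul]
        _ ≤ ∑ f : Fin n → Fin d, pR f * (S f - n * μ)^2 :=
            Finset.sum_le_sum_of_subset_of_nonneg (Finset.subset_univ _)
              fun f _ _ => mul_nonneg (hpR0 f) (sq_nonneg _)
        _ = n * Vr := hVar
    have h4 : (n:ℝ) * Vr ≤ ε * ((n:ℝ) * δ)^2 := by nlinarith
    exact le_of_mul_le_mul_right (key.trans h4) hnd
  have hTsum : 1 - ε ≤ ∑ f ∈ T, pR f := by
    have hsplit := Finset.sum_add_sum_compl T pR
    rw [hsum1] at hsplit
    linarith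
  have hTsum1 : ∑ f ∈ T, pR f ≤ 1 := by
    rw [← hsum1]
    exact Finset.sum_le_sum_of_subset_of_nonneg (Finset.subset_univ _) fun f _ _ => hpR0 f
  -- typical sequences have not-too-small probability
  have hTlow : ∀ f ∈ T, (2:ℝ) ^ (-((n:ℝ) * (μ + δ))) ≤ pR f := by
    intro f hf
    rw [hTdef, Finset.mem_filter] at hf
    obtain ⟨-, hpos, hS⟩ := hf
    have h0 : -(S f) = ∑ i, Real.logb 2 (lam (f i)) := by
      rw [hSdef]
      simp [hXdef, Finset.sum_neg_distrib]
    have h1 : pR f = (2:ℝ) ^ (-(S f)) := by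
      rw [h0, Real.rpow_sum_of_pos two_pos, hpRdef]
      exact Finset.prod_congr rfl fun i _ =>
        (Real.rpow_logb two_pos (by norm_num) (hpos i)).symm
    rw [h1]
    rw [Real.rpow_le_rpow_left_iff one_lt_two]
    exact neg_le_neg hS
  have hcard : (T.card : ℝ) ≤ (2:ℝ) ^ ((n:ℝ) * (μ + δ)) := by
    have hle1 : (T.card : ℝ) * (2:ℝ) ^ (-((n:ℝ) * (μ + δ))) ≤ 1 := by
      calc (T.card:ℝ) * (2:ℝ) ^ (-((n:ℝ) * (μ + δ)))
          = ∑ _f ∈ T, (2:ℝ) ^ (-((n:ℝ) * (μ + δ))) := by rw [Finset.sum_const, nsmul_eq_mul]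
        _ ≤ ∑ f ∈ T, pR f := Finset.sum_le_sum hTlow
        _ ≤ 1 := hTsum1
    have h2 := mul_le_mul_of_nonneg_right hle1
      (Real.rpow_nonneg (by norm_num : (0:ℝ) ≤ 2) ((n:ℝ) * (μ + δ)))
    rwa [mul_assoc, ← Real.rpow_add two_pos, neg_add_cancel, Real.rpow_zero, mul_one,
      one_mul] at h2
  -- tensor eigenvectors
  set v : (Fin n → Fin d) → (Fin n → Fin d) → ℂ := fun f g => ∏ i, u (f i) (g i) with hvdef
  have htpowH : (tpow ρ n).IsHermitian := by
    ext f g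
    simp only [conjTranspose_apply, tpow, Matrix.of_apply, star_prod]
    exact Finset.prod_congr rfl fun i _ => by
      rw [← Matrix.conjTranspose_apply, hH.eq]
  have hvec : ∀ f : Fin n → Fin d,
      tpow ρ n *ᵥ v f = ((∏ i, lam (f i) : ℝ) : ℂ) • v f := by
    intro f
    funext hh
    show ∑ g, tpow ρ n hh g * v f g = _
    calc ∑ g : Fin n → Fin d, tpow ρ n hh g * v f g
        = ∑ g : Fin n → Fin d, ∏ i, (ρ (hh i) (g i) * u (f i) (g i)) := by
          refine Finset.sum_congr rfl fun g _ => ?_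
          rw [Finset.prod_mul_distrib]; rfl
      _ = ∏ i, ∑ a, ρ (hh i) a * u (f i) a :=
          (Fintype.prod_sum (fun (i : Fin n) (a : Fin d) => ρ (hh i) a * u (f i) a)).symm
      _ = ∏ i, ((lam (f i) : ℂ) * u (f i) (hh i)) := by
          refine Finset.prod_congr rfl fun i _ => ?_
          have h1 : (ρ *ᵥ u (f i)) (hh i) = ∑ a, ρ (hh i) a * u (f i) a := rfl
          rw [← h1, hcol, Pi.smul_apply, smul_eq_mul]
      _ = ((∏ i, lam (f i) : ℝ) : ℂ) • v f hh := by
          rw [Finset.prod_mul_distrib]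
          push_cast
          rw [smul_eq_mul]
  have hortho : ∀ f g : Fin n → Fin d, star (v f) ⬝ᵥ v g = if f = g then 1 else 0 := by
    intro f g
    calc star (v f) ⬝ᵥ v g
        = ∑ h : Fin n → Fin d, ∏ i, ((starRingEnd ℂ) (u (f i) (h i)) * u (g i) (h i)) := by
          refine Finset.sum_congr rfl fun h _ => ?_
          simp only [Pi.star_apply, hvdef, star_prod, Finset.prod_mul_distrib]
          rfl
      _ = ∏ i, ∑ a, (starRingEnd ℂ) (u (f i) a) * u (g i) a :=
          (Fintype.prod_sum (fun (i : Fin n) (a : Fin d) =>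
            (starRingEnd ℂ) (u (f i) a) * u (g i) a)).symm
      _ = ∏ i, if f i = g i then (1:ℂ) else 0 :=
          Finset.prod_congr rfl fun i _ => honu _ _
      _ = if f = g then 1 else 0 := by
          by_cases h : f = g
          · subst h; simp
          · rw [if_neg h]
            obtain ⟨i, hi⟩ := Function.ne_iff.mp h
            exact Finset.prod_eq_zero (Finset.mem_univ i) (if_neg hi)
  -- the projector
  set P : Matrix (Fin n → Fin d) (Fin n → Fin d) ℂ :=
    ∑ f ∈ T, vecMulVec (v f) (star (v f)) with hPdef
  have hPH : P.IsHermitian := by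
    show Pᴴ = P
    rw [hPdef, Matrix.conjTranspose_sum]
    exact Finset.sum_congr rfl fun f _ => (vmv_herm (v f)).eq
  have hPP : P * P = P := by
    rw [hPdef, Finset.sum_mul_sum]
    refine Finset.sum_congr rfl fun f hf => ?_
    have h1 : ∀ g ∈ T, vecMulVec (v f) (star (v f)) * vecMulVec (v g) (star (v g))
        = if f = g then vecMulVec (v f) (star (v g)) else 0 := by
      intro g _
      rw [vmv_mul_vmv, hortho]
      split_ifs with h
      · rw [one_smul]
      · rw [zero_smul]
    rw [Finset.sum_congr rfl h1, Finset.sum_ite_eq T f (fun g => vecMulVec (v f) (star (v g))),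
      if_pos hf]
  have hAP : tpow ρ n * P = ∑ f ∈ T, (((∏ i, lam (f i) : ℝ) : ℂ)) • vecMulVec (v f) (star (v f)) := by
    rw [hPdef, Finset.mul_sum]
    refine Finset.sum_congr rfl fun f _ => ?_
    rw [mul_vmv, hvec, smul_vmv]
  have hPA : P * tpow ρ n = ∑ f ∈ T, (((∏ i, lam (f i) : ℝ) : ℂ)) • vecMulVec (v f) (star (v f)) := by
    rw [hPdef, Finset.sum_mul]
    refine Finset.sum_congr rfl fun f _ => ?_
    rw [vmv_mul, star_vecMul_herm htpowH, hvec, star_smul, vmv_smul]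
    congr 1
    exact Complex.conj_ofReal _
  have htr1 : ∀ f, (vecMulVec (v f) (star (v f))).trace = 1 := by
    intro f
    rw [trace_vmv]
    have h2 := hortho f f
    rw [if_pos rfl] at h2
    rw [← h2]
    exact Finset.sum_congr rfl fun h _ => by
      simp only [Pi.star_apply]
      ring
  have htrAP : (tpow ρ n * P).trace = ((∑ f ∈ T, pR f : ℝ) : ℂ) := by
    rw [hAP, Matrix.trace_sum]
    push_cast
    refine Finset.sum_congr rfl fun f _ => ?_
    rw [Matrix.trace_smul, htr1, smul_eq_mul, mul_one, hpRdef]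
    push_cast
    rfl
  have htrP : P.trace = (T.card : ℂ) := by
    rw [hPdef, Matrix.trace_sum, Finset.sum_congr rfl fun f _ => htr1 f]
    simp
  refine ⟨P, hPH, hPP, by rw [hPA, hAP], ?_, ?_⟩
  · rw [htrAP, Complex.ofReal_re]
    exact hTsum
  · rw [htrP]
    simpa using hcard
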